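/- Let T be a rank one bounded operator on a complex Hilbert space H that is normal (T T* = T* T), not selfadjoint (T ≠ T*), and has tr T ≠ 0. Then the following are equivalent: (i) the semigroup S(T, T*) generated by T and T* is a selfadjoint-ideal (SI) semigroup; (ii) ‖T‖ = 1 and |tr T| = 1; (iii) S(T, T*) is a simple semigroup. -/

import Mathlib

open ContinuousLinearMap
open scoped ComplexInnerProductSpace

variable {H : Type*} [NormedAddCommGroup H] [InnerProductSpace ℂ H] [CompleteSpace H]

/-- `J` is a (two-sided) semigroup-ideal of `S`. -/
def IsSemigroupIdeal {M : Type*} [Mul M] (S J : Set M) : Prop :=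
  J ⊆ S ∧ ∀ T ∈ J, ∀ X ∈ S, X * T ∈ J ∧ T * X ∈ J

/-- `S` is a selfadjoint-ideal (SI) semigroup: every semigroup-ideal of `S`
is closed under adjoints. -/
def IsSI (S : Set (H →L[ℂ] H)) : Prop :=
  ∀ J : Set (H →L[ℂ] H), IsSemigroupIdeal S J → ∀ T ∈ J, adjoint T ∈ J

/-- `S` is simple: every ideal of `S` containing a nonzero element equals `S`. -/
def IsSimpleSemigroup {M : Type*} [Mul M] [Zero M] (S : Set M) : Prop :=
  ∀ J : Set M, IsSemigroupIdeal S J → (∃ T ∈ J, T ≠ 0) → J = S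

/-- `S(T, T*)`: the semigroup generated by `T` and `T*`, i.e. all finite products
`A₁ ⋯ A_k` (`k ≥ 1`) with each `Aᵢ ∈ {T, T*}`. -/
noncomputable def genSG (T : H →L[ℂ] H) : Set (H →L[ℂ] H) :=
  (Subsemigroup.closure {T, adjoint T} : Subsemigroup (H →L[ℂ] H))

set_option maxHeartbeats 1600000 in
/-- for `T` rank one, normal, nonselfadjoint, with `tr T ≠ 0`, TFAE:
(i) `S(T, T*)` is SI; (ii) `‖T‖ = 1` and `|tr T| = 1`; (iii) `S(T, T*)` is simple. -/
theorem stmt11 (T : H →L[ℂ] H)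
    (hnormal : T * adjoint T = adjoint T * T) (hnsa : T ≠ adjoint T)
    (f : H) (hf : ‖f‖ = 1)
    (hrange : LinearMap.range (T : H →ₗ[ℂ] H) = Submodule.span ℂ {f})
    (htr : ⟪f, T f⟫ ≠ 0) :
    List.TFAE [IsSI (genSG T), ‖T‖ = 1 ∧ ‖⟪f, T f⟫‖ = 1,
      IsSimpleSemigroup (genSG T)] := by
  have hfne : f ≠ 0 := by
    intro h; rw [h, norm_zero] at hf; exact one_ne_zero hf.symm
  have hf1 : (⟪f, f⟫ : ℂ) = 1 := by
    rw [inner_self_eq_norm_sq_to_K, hf]; norm_num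
  set l : ℂ := ⟪f, T f⟫ with hl
  set m : ℂ := (starRingEnd ℂ) l with hm
  have hconjm : (starRingEnd ℂ) m = l := by rw [hm, Complex.conj_conj]
  have hconjl : (starRingEnd ℂ) l = m := hm.symm
  set P : H →L[ℂ] H := (innerSL ℂ f).smulRight f with hPdef
  have hPx : ∀ x : H, P x = ⟪f, x⟫ • f := fun x => by simp [hPdef]
  have hPf : P f = f := by rw [hPx, hf1, one_smul]
  set g : H := adjoint T f with hgdef
  have hspan : ∀ x : H, T x = ⟪g, x⟫ • f := by
    intro x
    have hmem : T x ∈ Submodule.span ℂ {f} := hrange ▸ LinearMap.mem_range_self (T : H →ₗ[ℂ] H) x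
    obtain ⟨c, hc⟩ := Submodule.mem_span_singleton.mp hmem
    have hcc : (⟪g, x⟫ : ℂ) = c := by
      rw [hgdef, adjoint_inner_left, ← hc, inner_smul_right, hf1, mul_one]
    rw [hcc, hc]
  have hlg : (⟪g, f⟫ : ℂ) = l := by
    rw [hgdef, adjoint_inner_left, ← hl]
  have h1 : (T * adjoint T) f = ⟪g, g⟫ • f := by
    rw [ContinuousLinearMap.mul_apply, ← hgdef, hspan g]
  have h2 : (adjoint T * T) f = l • g := by
    rw [ContinuousLinearMap.mul_apply, hspan f, hlg, map_smul, ← hgdef]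
  have hgf : ⟪g, g⟫ • f = l • g := by rw [← h1, ← h2, hnormal]
  have hl0 : l ≠ 0 := htr
  have hg2 : g = (l⁻¹ * ⟪g, g⟫) • f := by
    calc g = l⁻¹ • (l • g) := by rw [smul_smul, inv_mul_cancel₀ hl0, one_smul]
      _ = (l⁻¹ * ⟪g, g⟫) • f := by rw [← hgf, smul_smul]
  have h3 : l = (starRingEnd ℂ) (l⁻¹ * ⟪g, g⟫) := by
    conv_lhs => rw [← hlg, hg2]
    rw [inner_smul_left, hf1, mul_one]
  have h4 : m = l⁻¹ * ⟪g, g⟫ := by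
    rw [hm]
    conv_lhs => rw [h3]
    rw [Complex.conj_conj]
  have hgm : g = m • f := by rw [hg2, ← h4]
  have hTx : ∀ x : H, T x = (l * ⟪f, x⟫) • f := by
    intro x; rw [hspan x, hgm, inner_smul_left, hconjm]
  have hT : T = l • P := by
    ext x; rw [smul_apply, hPx, hTx, smul_smul]
  have hPP : P * P = P := by
    ext x; simp [mul_apply, hPx, inner_smul_right, hf1, hf]
  have hPsa : adjoint P = P := by
    symm; rw [eq_adjoint_iff]; intro x y
    simp only [hPx, inner_smul_left, inner_smul_right]
    rw [inner_conj_symm]; ring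
  have hadjsmul : ∀ z : ℂ, adjoint (z • P) = (starRingEnd ℂ) z • P := by
    intro z
    have h5 : adjoint (z • P) = (starRingEnd ℂ) z • adjoint P := by simp [map_smulₛₗ]
    rw [h5, hPsa]
  have hTadj : adjoint T = m • P := by rw [hT, hadjsmul, hconjl]
  have hmul : ∀ z w : ℂ, (z • P) * (w • P) = (z * w) • P := fun z w => by
    rw [smul_mul_smul_comm, hPP]
  have hinj : ∀ z w : ℂ, z • P = w • P → z = w := by
    intro z w h
    have h2' : z • f = w • f := by
      have := congrArg (fun (S : H →L[ℂ] H) => S f) h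
      simpa [hPf] using this
    exact smul_left_injective ℂ hfne h2'
  have hlnem : l ≠ m := by
    intro h; exact hnsa (by rw [hTadj, hT, h])
  -- the norm of T
  set r : ℝ := ‖l‖ with hrdef
  have hr0 : 0 < r := norm_pos_iff.mpr hl0
  have habsm : ‖m‖ = r := by rw [hm, Complex.norm_conj, hrdef]
  have hTnorm : ‖T‖ = r := by
    apply le_antisymm
    · refine opNorm_le_bound _ hr0.le fun x => ?_
      rw [hTx x, norm_smul, hf, mul_one]
      calc ‖l * ⟪f, x⟫‖ = ‖l‖ * ‖⟪f, x⟫‖ := norm_mul _ _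
        _ ≤ ‖l‖ * (‖f‖ * ‖x‖) := by
            gcongr; exact norm_inner_le_norm f x
        _ = r * ‖x‖ := by rw [hf, one_mul, ← hrdef]
    · have ha : ‖T f‖ ≤ ‖T‖ := by simpa [hf] using T.le_opNorm f
      have hb : ‖T f‖ = r := by
        rw [hTx f, hf1, mul_one, norm_smul, hf, mul_one, ← hrdef]
      linarith
  -- scalar absolute values
  have hzabs : ∀ j k : ℕ, ‖l ^ j * m ^ k‖ = r ^ (j + k) := by
    intro j k
    rw [norm_mul, norm_pow, norm_pow, habsm, ← hrdef, pow_add]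
  have hpow1 : ∀ n : ℕ, r ^ n = r → r ≠ 1 → n = 1 := by
    intro n hn hne
    match n, hn with
    | 0, hn => exact absurd ((pow_zero r) ▸ hn).symm hne
    | 1, hn => rfl
    | (n+2), hn =>
      exfalso
      have hc : r ^ (n + 1) * r = 1 * r := by
        rw [← pow_succ, one_mul]; exact hn
      have hone : r ^ (n + 1) = 1 := mul_right_cancel₀ hr0.ne' hc
      rcases lt_or_ge r 1 with hlt | hle
      · exact absurd hone (ne_of_lt (pow_lt_one₀ hr0.le hlt (Nat.succ_ne_zero n)))
      · have : 1 < r := lt_of_le_of_ne hle (Ne.symm hne)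
        exact absurd hone (ne_of_gt (one_lt_pow₀ this (Nat.succ_ne_zero n)))
  -- membership characterization of the generated semigroup
  have hTC : T ∈ Subsemigroup.closure ({T, adjoint T} : Set (H →L[ℂ] H)) :=
    Subsemigroup.subset_closure (Set.mem_insert _ _)
  have hTaC : adjoint T ∈ Subsemigroup.closure ({T, adjoint T} : Set (H →L[ℂ] H)) :=
    Subsemigroup.subset_closure (Set.mem_insert_iff.mpr (Or.inr rfl))
  have hmpow : ∀ k : ℕ, (m ^ (k + 1)) • P ∈
      Subsemigroup.closure ({T, adjoint T} : Set (H →L[ℂ] H)) := by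
    intro k
    induction k with
    | zero =>
      have he : adjoint T = m ^ 1 • P := by rw [hTadj, pow_one]
      rw [← he]; exact hTaC
    | succ k ih =>
      have hmm := Subsemigroup.mul_mem _ ih hTaC
      have he : (m ^ (k + 1) • P) * adjoint T = m ^ (k + 2) • P := by
        rw [hTadj, hmul, ← pow_succ]
      rwa [he] at hmm
  have hin : ∀ j k : ℕ, 1 ≤ j + k → (l ^ j * m ^ k) • P ∈
      Subsemigroup.closure ({T, adjoint T} : Set (H →L[ℂ] H)) := by
    intro j
    induction j with
    | zero =>
      intro k hk
      match k, hk with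
      | (k'+1), _ =>
        have he : (l ^ 0 * m ^ (k' + 1)) • P = m ^ (k' + 1) • P := by
          rw [pow_zero, one_mul]
        rw [he]; exact hmpow k'
    | succ j ih =>
      intro k _
      rcases Nat.eq_zero_or_pos (j + k) with h0 | hpos
      · obtain ⟨hj0, hk0⟩ := Nat.add_eq_zero.mp h0
        subst hj0; subst hk0
        have he : (l ^ 1 * m ^ 0) • P = T := by
          rw [pow_one, pow_zero, mul_one, ← hT]
        rw [he]; exact hTC
      · have hmm := Subsemigroup.mul_mem _ hTC (ih k hpos)
        have he : T * ((l ^ j * m ^ k) • P) = (l ^ (j + 1) * m ^ k) • P := by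
          rw [hT, hmul]; congr 1; ring
        rwa [he] at hmm
  have hSG : ∀ A : H →L[ℂ] H, A ∈ genSG T ↔
      ∃ j k : ℕ, 1 ≤ j + k ∧ A = (l ^ j * m ^ k) • P := by
    intro A
    constructor
    · intro hA
      have hA' : A ∈ Subsemigroup.closure ({T, adjoint T} : Set (H →L[ℂ] H)) := hA
      clear hA
      induction hA' using Subsemigroup.closure_induction with
      | mem B hB =>
        rcases hB with hB | hB
        · exact ⟨1, 0, by omega, by rw [hB, pow_one, pow_zero, mul_one, hT]⟩
        · exact ⟨0, 1, by omega, by rw [hB, pow_zero, pow_one, one_mul, hTadj]⟩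
      | mul B C _ _ ihB ihC =>
        obtain ⟨j, k, hjk, rfl⟩ := ihB
        obtain ⟨j', k', hjk', rfl⟩ := ihC
        exact ⟨j + j', k + k', by omega, by rw [hmul]; congr 1; ring⟩
    · rintro ⟨j, k, hjk, rfl⟩
      exact hin j k hjk
  have hconjz : ∀ j k : ℕ, (starRingEnd ℂ) (l ^ j * m ^ k) = l ^ k * m ^ j := by
    intro j k
    rw [map_mul, map_pow, map_pow, hconjl, hconjm, mul_comm]
  have hT0 : T ≠ 0 := by
    intro h
    apply hl0
    rw [hl, h]; simp
  -- the candidate ideal used when r ≠ 1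
  set J : Set (H →L[ℂ] H) :=
    {A : H →L[ℂ] H | ∃ j k : ℕ, 1 ≤ j ∧ A = (l ^ j * m ^ k) • P} with hJdef
  have hJ : IsSemigroupIdeal (genSG T) J := by
    constructor
    · rintro A ⟨j, k, hj, rfl⟩
      exact (hSG _).mpr ⟨j, k, by omega, rfl⟩
    · rintro A ⟨j, k, hj, rfl⟩ X hX
      obtain ⟨a, b, hab, rfl⟩ := (hSG X).mp hX
      constructor
      · exact ⟨a + j, b + k, by omega, by rw [hmul]; congr 1; ring⟩
      · exact ⟨j + a, k + b, by omega, by rw [hmul]; congr 1; ring⟩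
  have hTJ : T ∈ J := ⟨1, 0, le_refl 1, by rw [pow_one, pow_zero, mul_one, hT]⟩
  have hadjTnJ : r ≠ 1 → adjoint T ∉ J := by
    rintro hr1 ⟨j, k, hj, heq⟩
    have hz : m = l ^ j * m ^ k := hinj _ _ (by rw [← hTadj, heq])
    have habs : r ^ (j + k) = r := by rw [← hzabs j k, ← hz, habsm]
    have hjk1 : j + k = 1 := hpow1 _ habs hr1
    have hj1 : j = 1 := by omega
    have hk0 : k = 0 := by omega
    rw [hj1, hk0, pow_one, pow_zero, mul_one] at hz
    exact hlnem hz.symm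
  have hadjTS : adjoint T ∈ genSG T :=
    (hSG _).mpr ⟨0, 1, by omega, by rw [pow_zero, pow_one, one_mul, hTadj]⟩
  -- unimodularity of scalars when r = 1
  have hz1 : r = 1 → ∀ j k : ℕ, (starRingEnd ℂ) (l ^ j * m ^ k) * (l ^ j * m ^ k) = 1 := by
    intro hr1 j k
    have habs : ‖l ^ j * m ^ k‖ = 1 := by rw [hzabs, hr1, one_pow]
    rw [mul_comm, Complex.mul_conj, Complex.normSq_eq_norm_sq, habs]
    norm_num
  tfae_have 1 → 2
  · intro hsi
    have hr1 : r = 1 := by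
      by_contra hr1
      exact hadjTnJ hr1 (hsi J hJ T hTJ)
    exact ⟨by rw [hTnorm, hr1], hr1⟩
  tfae_have 3 → 2
  · intro hsimp
    have hr1 : r = 1 := by
      by_contra hr1
      have hJeq := hsimp J hJ ⟨T, hTJ, hT0⟩
      exact hadjTnJ hr1 (hJeq ▸ hadjTS)
    exact ⟨by rw [hTnorm, hr1], hr1⟩
  tfae_have 2 → 1
  · rintro ⟨-, hr1⟩
    intro J' hJ' A hA
    obtain ⟨j, k, hjk, rfl⟩ := (hSG A).mp (hJ'.1 hA)
    have hadjmem : adjoint ((l ^ j * m ^ k) • P) ∈ genSG T := by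
      rw [hadjsmul, hconjz]
      exact (hSG _).mpr ⟨k, j, by omega, rfl⟩
    have hAadj_eq : adjoint ((l ^ j * m ^ k) • P) =
        adjoint ((l ^ j * m ^ k) • P) * ((l ^ j * m ^ k) • P) *
          adjoint ((l ^ j * m ^ k) • P) := by
      rw [hadjsmul, hmul, hmul, hz1 hr1 j k, one_mul]
    have m1 := (hJ'.2 _ hA _ hadjmem).1
    have m2 := (hJ'.2 _ m1 _ hadjmem).2
    rw [hAadj_eq]
    exact m2
  tfae_have 2 → 3
  · rintro ⟨-, hr1⟩
    intro J' hJ' hex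
    obtain ⟨A, hA, -⟩ := hex
    refine Set.Subset.antisymm hJ'.1 fun B hB => ?_
    obtain ⟨j, k, hjk, rfl⟩ := (hSG A).mp (hJ'.1 hA)
    obtain ⟨a, b, hab, rfl⟩ := (hSG B).mp hB
    have hadjmem : adjoint ((l ^ j * m ^ k) • P) ∈ genSG T := by
      rw [hadjsmul, hconjz]
      exact (hSG _).mpr ⟨k, j, by omega, rfl⟩
    have hXS : ((l ^ a * m ^ b) • P) * adjoint ((l ^ j * m ^ k) • P) ∈ genSG T := by
      have he2 : ((l ^ a * m ^ b) • P) * adjoint ((l ^ j * m ^ k) • P) =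
          (l ^ (a + k) * m ^ (b + j)) • P := by
        rw [hadjsmul, hconjz, hmul]; congr 1; ring
      rw [he2]
      exact (hSG _).mpr ⟨a + k, b + j, by omega, rfl⟩
    have m1 := (hJ'.2 _ hA _ hXS).1
    have he : ((l ^ a * m ^ b) • P) * adjoint ((l ^ j * m ^ k) • P) *
        ((l ^ j * m ^ k) • P) = (l ^ a * m ^ b) • P := by
      rw [hadjsmul, hmul, hmul, mul_assoc, hz1 hr1 j k, mul_one]
    rwa [he] at m1
  tfae_finish
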